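/- Suppose that the sequence (x_k)_{k∈ℕ} is bounded, that β_k + γ_k ≤ 1 for every k ∈ ℕ, that α_k → 0, limsup_{k→∞} |β_k| < 1, 1 − α_k − β_k − γ_k → 0, 0 < liminf_{k→∞} (1 − β_k − γ_k/2) ≤ limsup_{k→∞} (1 − β_k − γ_k/2) < 1, δ_k e_k → 0 strongly, and 1 − c_k/c_{k+1} → 0. Then: (1) the sequence (J_{c_k}(x_k))_{k∈ℕ} is bounded; (2) x_k − J_{c_k}(x_k) → 0 strongly; (3) if moreover inf_{k∈ℕ} c_k > 0 or c_k → ∞, then Ω is nonempty and Ω ⊆ zer A. -/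

import Mathlib

open Filter InnerProductSpace

/-- `z` is a weak sequential cluster point of the sequence `y`: some subsequence of `y`
converges weakly to `z`. -/
def WSeqClusterPt {H : Type*} [NormedAddCommGroup H] [InnerProductSpace ℝ H]
    (y : ℕ → H) (z : H) : Prop :=
  ∃ φ : ℕ → ℕ, StrictMono φ ∧
    ∀ w : H, Tendsto (fun k => ⟪y (φ k), w⟫_ℝ) atTop (nhds ⟪z, w⟫_ℝ)

/-- Proposition 3.7: asymptotic regularity of the generalized proximal point algorithm:
if `(x_k)` is bounded, `β_k + γ_k ≤ 1`, `α_k → 0`, `limsup |β_k| < 1`,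
`1 - α_k - β_k - γ_k → 0`, `0 < liminf (1-β_k-γ_k/2) ≤ limsup (1-β_k-γ_k/2) < 1`,
`δ_k e_k → 0`, and `1 - c_k/c_{k+1} → 0`, then `(J_{c_k}(x_k))` is bounded,
`x_k - J_{c_k}(x_k) → 0`, and (if `inf c_k > 0` or `c_k → ∞`) the weak sequential cluster
points of `(x_k)` form a nonempty subset of `zer A`. -/
lemma bdd_of_tendsto {H : Type*} [NormedAddCommGroup H] {f : ℕ → H} {L : H}
    (h : Tendsto f atTop (nhds L)) : ∃ C, ∀ k, ‖f k‖ ≤ C := by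
  obtain ⟨R, hR, hRd⟩ := cauchySeq_bdd h.cauchySeq
  refine ⟨‖f 0‖ + R, fun k => ?_⟩
  have h1 := hRd k 0
  rw [dist_eq_norm] at h1
  calc ‖f k‖ = ‖(f k - f 0) + f 0‖ := by rw [sub_add_cancel]
    _ ≤ ‖f k - f 0‖ + ‖f 0‖ := norm_add_le _ _
    _ ≤ ‖f 0‖ + R := by linarith

lemma prefix_bound {H : Type*} [NormedAddCommGroup H] (f : ℕ → H) :
    ∀ N : ℕ, ∃ D, ∀ k, k < N → ‖f k‖ ≤ D := by
  intro N
  induction N with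
  | zero => exact ⟨0, fun k hk => absurd hk (Nat.not_lt_zero k)⟩
  | succ n ih =>
      obtain ⟨D, hD⟩ := ih
      refine ⟨max D ‖f n‖, fun k hk => ?_⟩
      rcases Nat.lt_succ_iff_lt_or_eq.1 hk with h | h
      · exact (hD k h).trans (le_max_left _ _)
      · subst h; exact le_max_right _ _

lemma range_bdd_of_eventually {H : Type*} [NormedAddCommGroup H] (f : ℕ → H) (C : ℝ) (N : ℕ)
    (h : ∀ k, N ≤ k → ‖f k‖ ≤ C) : Bornology.IsBounded (Set.range f) := by
  obtain ⟨D, hD⟩ := prefix_bound f N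
  rw [isBounded_iff_forall_norm_le]
  refine ⟨max C D, ?_⟩
  rintro v ⟨k, rfl⟩
  rcases lt_or_ge k N with hk | hk
  · exact (hD k hk).trans (le_max_right _ _)
  · exact (h k hk).trans (le_max_left _ _)


section Res
variable {H : Type*} [NormedAddCommGroup H] [InnerProductSpace ℝ H]
variable {A : H → Set H} {J : ℝ → H → H}

lemma res_firm
    (hmono : ∀ x y xu yv : H, xu ∈ A x → yv ∈ A y → 0 ≤ ⟪x - y, xu - yv⟫_ℝ)
    (hJ : ∀ c : ℝ, 0 < c → ∀ x : H, (1 / c) • (x - J c x) ∈ A (J c x))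
    {c : ℝ} (hc : 0 < c) (x y : H) :
    ‖J c x - J c y‖ ^ 2 ≤ ⟪J c x - J c y, x - y⟫_ℝ := by
  have h := hmono _ _ _ _ (hJ c hc x) (hJ c hc y)
  rw [← smul_sub, real_inner_smul_right] at h
  have h2 : 0 ≤ ⟪J c x - J c y, x - J c x - (y - J c y)⟫_ℝ := by
    have hc' : (0:ℝ) < 1 / c := by positivity
    nlinarith [h]
  have e : x - J c x - (y - J c y) = (x - y) - (J c x - J c y) := by abel
  rw [e, inner_sub_right, real_inner_self_eq_norm_sq] at h2
  linarith

lemma res_nonexp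
    (hmono : ∀ x y xu yv : H, xu ∈ A x → yv ∈ A y → 0 ≤ ⟪x - y, xu - yv⟫_ℝ)
    (hJ : ∀ c : ℝ, 0 < c → ∀ x : H, (1 / c) • (x - J c x) ∈ A (J c x))
    {c : ℝ} (hc : 0 < c) (x y : H) :
    ‖J c x - J c y‖ ≤ ‖x - y‖ := by
  have h1 := res_firm hmono hJ hc x y
  have h2 := real_inner_le_norm (J c x - J c y) (x - y)
  nlinarith [norm_nonneg (J c x - J c y), norm_nonneg (x - y)]

lemma res_reflected
    (hmono : ∀ x y xu yv : H, xu ∈ A x → yv ∈ A y → 0 ≤ ⟪x - y, xu - yv⟫_ℝ)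
    (hJ : ∀ c : ℝ, 0 < c → ∀ x : H, (1 / c) • (x - J c x) ∈ A (J c x))
    {c : ℝ} (hc : 0 < c) (x y : H) :
    ‖((2:ℝ) • J c x - x) - ((2:ℝ) • J c y - y)‖ ≤ ‖x - y‖ := by
  have h1 := res_firm hmono hJ hc x y
  have e : ((2:ℝ) • J c x - x) - ((2:ℝ) • J c y - y)
      = (2:ℝ) • (J c x - J c y) - (x - y) := by
    rw [smul_sub]; abel
  rw [e]
  have h2 : ‖(2:ℝ) • (J c x - J c y) - (x - y)‖ ^ 2
      = 4 * ‖J c x - J c y‖ ^ 2 - 4 * ⟪J c x - J c y, x - y⟫_ℝ + ‖x - y‖ ^ 2 := by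
    rw [norm_sub_sq_real, norm_smul, real_inner_smul_left]
    simp [Real.norm_eq_abs]
    ring
  nlinarith [norm_nonneg ((2:ℝ) • (J c x - J c y) - (x - y)), norm_nonneg (x - y)]

lemma res_identity
    (hmono : ∀ x y xu yv : H, xu ∈ A x → yv ∈ A y → 0 ≤ ⟪x - y, xu - yv⟫_ℝ)
    (hJ : ∀ c : ℝ, 0 < c → ∀ x : H, (1 / c) • (x - J c x) ∈ A (J c x))
    {c c' : ℝ} (hc : 0 < c) (hc' : 0 < c') (x : H) :
    ‖J c' x - J c x‖ ≤ |1 - c' / c| * ‖x - J c x‖ := by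
  set p := J c x with hp
  set q := (c' / c) • x + (1 - c' / c) • p with hq
  have hqp : q - p = (c' / c) • (x - p) := by
    rw [hq, smul_sub]; module
  have h1 : (1 / c') • (q - p) ∈ A p := by
    have e : (1 / c') • (q - p) = (1 / c) • (x - p) := by
      rw [hqp, smul_smul]
      congr 1
      field_simp
    rw [e]; exact hJ c hc x
  have h2 := hJ c' hc' q
  have h3 := hmono _ _ _ _ h2 h1
  rw [← smul_sub, real_inner_smul_right] at h3
  have e2 : q - J c' q - (q - p) = -(J c' q - p) := by abel
  rw [e2, inner_neg_right, real_inner_self_eq_norm_sq] at h3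
  have hc'' : (0:ℝ) < 1 / c' := by positivity
  have h4 : ‖J c' q - p‖ ^ 2 ≤ 0 := by nlinarith
  have h5 : J c' q = p := by
    have : ‖J c' q - p‖ = 0 := by nlinarith [norm_nonneg (J c' q - p), sq_nonneg ‖J c' q - p‖]
    rwa [norm_sub_eq_zero_iff] at this
  have h6 : ‖J c' x - J c' q‖ ≤ ‖x - q‖ := res_nonexp hmono hJ hc' x q
  have e3 : x - q = (1 - c' / c) • (x - p) := by
    rw [hq]; module
  rw [h5] at h6
  rwa [e3, norm_smul, Real.norm_eq_abs] at h6

end Res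

set_option maxHeartbeats 1000000 in

lemma suzuki {E : Type*} [NormedAddCommGroup E] [NormedSpace ℝ E]
    (x z : ℕ → E) (lam : ℕ → ℝ) (a b M : ℝ)
    (ha : 0 < a) (hb : b < 1)
    (hlam : ∀ k, a ≤ lam k ∧ lam k ≤ b)
    (hrec : ∀ k, x (k + 1) = x k + lam k • (z k - x k))
    (hbd : ∀ k, ‖x k‖ ≤ M ∧ ‖z k‖ ≤ M)
    (heps : ∀ ε : ℝ, 0 < ε → ∃ N, ∀ k, N ≤ k → ‖z (k + 1) - z k‖ ≤ ‖x (k + 1) - x k‖ + ε) :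
    Tendsto (fun k => ‖z k - x k‖) atTop (nhds 0) := by
  set r : ℕ → ℝ := fun k => ‖z k - x k‖ with hrdef
  clear_value r
  have hreq : ∀ k, r k = ‖z k - x k‖ := fun k => by rw [hrdef]
  have hr0 : ∀ k, 0 ≤ r k := fun k => by rw [hreq]; exact norm_nonneg _
  have hM0 : 0 ≤ M := le_trans (norm_nonneg _) (hbd 0).1
  have hrM : ∀ k, r k ≤ 2 * M := by
    intro k
    have h1 := (hbd k).1
    have h2 := (hbd k).2
    rw [hreq]
    calc ‖z k - x k‖ ≤ ‖z k‖ + ‖x k‖ := norm_sub_le _ _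
      _ ≤ 2 * M := by linarith
  have hab : a ≤ b := le_trans (hlam 0).1 (hlam 0).2
  have hb0 : (0:ℝ) < 1 - b := by linarith
  have hxd : ∀ k, ‖x (k + 1) - x k‖ = lam k * r k := by
    intro k
    rw [hreq, hrec k, add_sub_cancel_left, norm_smul, Real.norm_eq_abs,
      abs_of_pos (lt_of_lt_of_le ha (hlam k).1)]
  have hbddU : IsBoundedUnder (· ≤ ·) atTop r := isBoundedUnder_of ⟨2 * M, hrM⟩
  have hbddL : IsBoundedUnder (· ≥ ·) atTop r := isBoundedUnder_of ⟨0, hr0⟩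
  have hcobdd : IsCoboundedUnder (· ≤ ·) atTop r := hbddL.isCoboundedUnder_le
  set L := Filter.limsup r Filter.atTop with hLdef
  rcases le_or_gt L 0 with hL | hL
  · -- limsup ≤ 0 : done
    rw [Metric.tendsto_atTop]
    intro ε hε
    have hev := Filter.eventually_lt_of_limsup_lt (lt_of_le_of_lt hL hε) hbddU
    obtain ⟨N, hN⟩ := eventually_atTop.1 hev
    refine ⟨N, fun n hn => ?_⟩
    rw [Real.dist_eq, sub_zero, abs_of_nonneg (hr0 n)]
    exact hN n hn
  exfalso
  -- choose j
  obtain ⟨j, hj⟩ := exists_nat_gt ((4 * M + 2) / L / a)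
  have hja : (4 * M + 2) / L < j * a := by rwa [div_lt_iff₀ ha] at hj
  have hjL : 4 * M + 2 < (1 + (j:ℝ) * a) * L := by
    rw [div_lt_iff₀ hL] at hja
    nlinarith
  have hja0 : (0:ℝ) ≤ (j:ℝ) * a := by positivity
  -- the combinatorial constants
  obtain ⟨Q, hQ0, hQs⟩ : ∃ Q : ℕ → ℝ, Q 0 = 1 ∧ ∀ m, Q (m + 1) = (Q m + (m + 1)) / (1 - b) :=
    ⟨fun n => Nat.rec 1 (fun m q => (q + (m + 1)) / (1 - b)) n, rfl, fun _ => rfl⟩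
  have hQpos : ∀ m, 0 ≤ Q m := by
    intro m
    induction m with
    | zero => rw [hQ0]; norm_num
    | succ m ih =>
        rw [hQs]
        apply div_nonneg _ hb0.le
        positivity
  obtain ⟨K, hK0, hKs⟩ : ∃ K : ℕ → ℝ, K 0 = 0 ∧
      ∀ m, K (m + 1) = (K m + (m + 1)) / (1 - b) + (m + 1) * Q (m + 1) :=
    ⟨fun n => Nat.rec 0 (fun m q => (q + (m + 1)) / (1 - b) + (m + 1) * Q (m + 1)) n, rfl,
      fun _ => rfl⟩
  have hKpos : ∀ m, 0 ≤ K m := by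
    intro m
    induction m with
    | zero => rw [hK0]
    | succ m ih =>
        rw [hKs]
        have h1 : (0:ℝ) ≤ (K m + (m + 1)) / (1 - b) := by
          apply div_nonneg _ hb0.le
          positivity
        have h2 := hQpos (m + 1)
        positivity
  -- choice of δ
  set C := (1 + (j:ℝ) * a) + 2 * Q j + K j with hC
  have hC0 : 0 ≤ C := by
    have := hQpos j
    have := hKpos j
    rw [hC]; positivity
  set δ := min 1 ((2 * M + 2) / (C + 1)) with hδ
  have hδpos : 0 < δ := lt_min one_pos (by positivity)
  have hδC : C * δ < 2 * M + 2 := by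
    have h1 : δ ≤ (2 * M + 2) / (C + 1) := min_le_right _ _
    have h2 : C * δ ≤ C * ((2 * M + 2) / (C + 1)) := mul_le_mul_of_nonneg_left h1 hC0
    have h3 : C * ((2 * M + 2) / (C + 1)) < 2 * M + 2 := by
      rw [mul_div_assoc']
      rw [div_lt_iff₀ (by linarith)]
      nlinarith
    exact lt_of_le_of_lt h2 h3
  obtain ⟨N0, hN0⟩ := heps δ hδpos
  have hevr : ∀ᶠ k in atTop, r k < L + δ :=
    Filter.eventually_lt_of_limsup_lt (by linarith) hbddU
  obtain ⟨N1, hN1⟩ := eventually_atTop.1 hevr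
  -- one-step facts
  have hzd : ∀ k, N0 ≤ k → ‖z (k + 1) - z k‖ ≤ lam k * r k + δ := by
    intro k hk
    have := hN0 k hk
    rwa [hxd] at this
  have hstep : ∀ k, N0 ≤ k → r (k + 1) ≤ r k + δ := by
    intro k hk
    have hid : z (k + 1) - x (k + 1) = (z (k + 1) - z k) + (1 - lam k) • (z k - x k) := by
      rw [hrec k]; module
    have h1 : r (k + 1) ≤ ‖z (k + 1) - z k‖ + (1 - lam k) * r k := by
      have e : r (k + 1) = ‖(z (k + 1) - z k) + (1 - lam k) • (z k - x k)‖ := by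
        rw [hreq, hid]
      rw [e, hreq k]
      have h4 := norm_add_le (z (k + 1) - z k) ((1 - lam k) • (z k - x k))
      rw [norm_smul, Real.norm_eq_abs,
        abs_of_pos (by linarith [(hlam k).2] : (0:ℝ) < 1 - lam k)] at h4
      exact h4
    have h2 := hzd k hk
    linarith
  have hmono : ∀ i, N0 ≤ i → ∀ m, r (i + m) ≤ r i + m * δ := by
    intro i hi m
    induction m with
    | zero => simp
    | succ m ih =>
        have h1 := hstep (i + m) (by omega)
        have : r (i + (m + 1)) = r ((i + m) + 1) := by rw [Nat.add_assoc]
        rw [this]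
        push_cast
        push_cast at ih
        linarith
  have htele : ∀ i, N0 ≤ i → ∀ m, ‖z (i + m) - z i‖ ≤
      ∑ n ∈ Finset.range m, (lam (i + n) * r (i + n) + δ) := by
    intro i hi m
    induction m with
    | zero => simp
    | succ m ih =>
        have h1 : z (i + (m + 1)) - z i = (z ((i + m) + 1) - z (i + m)) + (z (i + m) - z i) := by
          rw [Nat.add_assoc]; abel
        have h2 := hzd (i + m) (by omega)
        calc ‖z (i + (m + 1)) - z i‖
            ≤ ‖z ((i + m) + 1) - z (i + m)‖ + ‖z (i + m) - z i‖ := by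
              rw [h1]; exact norm_add_le _ _
          _ ≤ (lam (i + m) * r (i + m) + δ) + ∑ n ∈ Finset.range m, (lam (i + n) * r (i + n) + δ) := by
              exact add_le_add h2 ih
          _ = ∑ n ∈ Finset.range (m + 1), (lam (i + n) * r (i + n) + δ) := by
              rw [Finset.sum_range_succ]; ring
  -- the key Goebel–Kirk–Suzuki inequality
  have KEY : ∀ jj : ℕ, ∀ i, N0 ≤ i →
      (1 + ∑ n ∈ Finset.range jj, lam (i + n)) * r (i + jj)
        - Q jj * (r i - r (i + jj)) - K jj * δ ≤ ‖z (i + jj) - x i‖ := by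
    intro jj
    induction jj with
    | zero =>
        intro i hi
        rw [hQ0, hK0]
        simp only [Finset.sum_range_zero, Nat.add_zero]
        rw [hreq i]
        have : ((1:ℝ) + 0) * ‖z i - x i‖ - 1 * (‖z i - x i‖ - ‖z i - x i‖) - 0 * δ
            = ‖z i - x i‖ := by ring
        rw [this]
    | succ jj ih =>
        intro i hi
        have hIH := ih (i + 1) (by omega)
        have e1 : i + 1 + jj = i + (jj + 1) := by omega
        rw [e1] at hIH
        set r' := r (i + (jj + 1)) with hr'
        set S' := ∑ n ∈ Finset.range jj, lam (i + 1 + n) with hS'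
        set S := ∑ n ∈ Finset.range (jj + 1), lam (i + n) with hSdef
        have hSS : S = lam i + S' := by
          rw [hSdef, Finset.sum_range_succ']
          simp only [Nat.add_zero]
          rw [add_comm]
          congr 1
          apply Finset.sum_congr rfl
          intro n _
          congr 1
          omega
        have hS'a : (jj:ℝ) * a ≤ S' := by
          have := Finset.card_nsmul_le_sum (Finset.range jj) (fun n => lam (i + 1 + n)) a
            (fun n _ => (hlam (i + 1 + n)).1)
          simpa [nsmul_eq_mul] using this
        have hlami := hlam i
        have h1b : (0:ℝ) < 1 - lam i := by linarith [hlami.2]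
        have hlamipos : (0:ℝ) < lam i := lt_of_lt_of_le ha hlami.1
        -- vector identity
        have hid : (1 - lam i) • (z (i + (jj + 1)) - x i)
            = (z (i + (jj + 1)) - x (i + 1)) - lam i • (z (i + (jj + 1)) - z i) := by
          rw [hrec i]; module
        set X := ‖z (i + (jj + 1)) - x i‖ with hX
        set Y := ‖z (i + (jj + 1)) - x (i + 1)‖ with hY
        set Zz := ‖z (i + (jj + 1)) - z i‖ with hZz
        have hnorm1 : Y - lam i * Zz ≤ (1 - lam i) * X := by
          have h2 := norm_sub_norm_le (z (i + (jj + 1)) - x (i + 1))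
            (lam i • (z (i + (jj + 1)) - z i))
          rw [← hid, norm_smul, norm_smul, Real.norm_eq_abs, Real.norm_eq_abs,
            abs_of_pos hlamipos, abs_of_pos h1b] at h2
          exact h2
        -- Δ and the telescoping bound
        set Δ := r i - r' + ((jj:ℝ) + 1) * δ with hΔ
        have hΔ0 : 0 ≤ Δ := by
          have := hmono i hi (jj + 1)
          rw [hΔ]
          push_cast at this ⊢
          linarith
        have hterm : ∀ n ∈ Finset.range (jj + 1),
            lam (i + n) * r (i + n) + δ ≤ lam (i + n) * r' + Δ + δ := by
          intro n hn
          have hn' : n ≤ jj := by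
            rw [Finset.mem_range] at hn; omega
          have hl := hlam (i + n)
          have h1 : r (i + n) ≤ r' + Δ := by
            have hmn := hmono i hi n
            have hδn : (n:ℝ) * δ ≤ ((jj:ℝ) + 1) * δ := by
              have hc : (n:ℝ) ≤ (jj:ℝ) + 1 := by
                have : (n:ℝ) ≤ (jj:ℝ) := Nat.cast_le.2 hn'
                linarith
              exact mul_le_mul_of_nonneg_right hc hδpos.le
            rw [hΔ]
            linarith
          have h2 : lam (i + n) * r (i + n) ≤ lam (i + n) * (r' + Δ) :=
            mul_le_mul_of_nonneg_left h1 (le_trans ha.le hl.1)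
          have h3 : lam (i + n) * Δ ≤ Δ := mul_le_of_le_one_left hΔ0 (by linarith [hl.2])
          have h4 : lam (i + n) * (r' + Δ) = lam (i + n) * r' + lam (i + n) * Δ := mul_add _ _ _
          linarith
        have hsum : ∑ n ∈ Finset.range (jj + 1), (lam (i + n) * r (i + n) + δ)
            ≤ S * r' + ((jj:ℝ) + 1) * Δ + ((jj:ℝ) + 1) * δ := by
          have h1 := Finset.sum_le_sum hterm
          have h2 : ∑ n ∈ Finset.range (jj + 1), (lam (i + n) * r' + Δ + δ)
              = S * r' + ((jj:ℝ) + 1) * Δ + ((jj:ℝ) + 1) * δ := by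
            rw [Finset.sum_add_distrib, Finset.sum_add_distrib, ← Finset.sum_mul,
              Finset.sum_const, Finset.sum_const, Finset.card_range]
            push_cast
            rw [hSdef]
            ring
          linarith
        have hzz : Zz ≤ S * r' + ((jj:ℝ) + 1) * Δ + ((jj:ℝ) + 1) * δ :=
          le_trans (htele i hi (jj + 1)) hsum
        -- bound r(i+1) - r'
        have hri1 : r (i + 1) - r' ≤ Δ := by
          have h1 := hstep i hi
          have h2 : δ ≤ ((jj:ℝ) + 1) * δ := by nlinarith [hδpos.le]
          rw [hΔ]
          linarith
        -- combine
        have hYlb : (1 + S') * r' - Q jj * Δ - K jj * δ ≤ Y := by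
          have h1 : Q jj * (r (i + 1) - r') ≤ Q jj * Δ :=
            mul_le_mul_of_nonneg_left hri1 (hQpos jj)
          linarith [hIH]
        have hZub : lam i * Zz ≤ lam i * S * r' + ((jj:ℝ) + 1) * Δ + ((jj:ℝ) + 1) * δ := by
          have h1 : lam i * Zz ≤ lam i * (S * r' + ((jj:ℝ) + 1) * Δ + ((jj:ℝ) + 1) * δ) :=
            mul_le_mul_of_nonneg_left hzz hlamipos.le
          have h2 : lam i * (((jj:ℝ) + 1) * Δ) ≤ ((jj:ℝ) + 1) * Δ :=
            mul_le_of_le_one_left (by positivity) (by linarith [hlami.2])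
          have h3 : lam i * (((jj:ℝ) + 1) * δ) ≤ ((jj:ℝ) + 1) * δ :=
            mul_le_of_le_one_left (by positivity) (by linarith [hlami.2])
          have h4 : lam i * (S * r' + ((jj:ℝ) + 1) * Δ + ((jj:ℝ) + 1) * δ)
              = lam i * S * r' + lam i * (((jj:ℝ) + 1) * Δ) + lam i * (((jj:ℝ) + 1) * δ) := by
            ring
          linarith
        have idr : (1 + S' - lam i * S) * r' = (1 - lam i) * (1 + S) * r' := by
          rw [hSS]; ring
        have hmain : (1 - lam i) * (1 + S) * r' - (Q jj + ((jj:ℝ) + 1)) * Δ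
            - (K jj + ((jj:ℝ) + 1)) * δ ≤ (1 - lam i) * X := by
          linarith [hnorm1, hYlb, hZub, idr]
        -- the error-term bookkeeping
        have hQq : Q (jj + 1) * (1 - b) = Q jj + ((jj:ℝ) + 1) := by
          rw [hQs]
          field_simp
        have hbrpos : 0 ≤ Q (jj + 1) * Δ + ((K jj + ((jj:ℝ) + 1)) / (1 - b)) * δ := by
          have h1 := hQpos (jj + 1)
          have h2 := hKpos jj
          have h3 : (0:ℝ) ≤ (K jj + ((jj:ℝ) + 1)) / (1 - b) := by positivity
          positivity
        have h9 : (Q jj + ((jj:ℝ) + 1)) * Δ + (K jj + ((jj:ℝ) + 1)) * δ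
            ≤ (1 - lam i) * (Q (jj + 1) * (r i - r') + K (jj + 1) * δ) := by
          have hexp : Q (jj + 1) * (r i - r') + K (jj + 1) * δ
              = Q (jj + 1) * Δ + ((K jj + ((jj:ℝ) + 1)) / (1 - b)) * δ := by
            rw [hKs, hΔ]
            ring
          have e : (1 - b) * (Q (jj + 1) * Δ + ((K jj + ((jj:ℝ) + 1)) / (1 - b)) * δ)
              = (Q jj + ((jj:ℝ) + 1)) * Δ + (K jj + ((jj:ℝ) + 1)) * δ := by
            rw [← hQq]
            field_simp
          have mono : (1 - b) * (Q (jj + 1) * Δ + ((K jj + ((jj:ℝ) + 1)) / (1 - b)) * δ)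
              ≤ (1 - lam i) * (Q (jj + 1) * Δ + ((K jj + ((jj:ℝ) + 1)) / (1 - b)) * δ) :=
            mul_le_mul_of_nonneg_right (by linarith [hlami.2]) hbrpos
          rw [hexp]
          linarith
        have e9 : (1 - lam i) * ((1 + S) * r' - Q (jj + 1) * (r i - r') - K (jj + 1) * δ)
            = (1 - lam i) * (1 + S) * r'
              - (1 - lam i) * (Q (jj + 1) * (r i - r') + K (jj + 1) * δ) := by ring
        have hfinal : (1 - lam i) * ((1 + S) * r' - Q (jj + 1) * (r i - r') - K (jj + 1) * δ)
            ≤ (1 - lam i) * X := by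
          rw [e9]
          linarith
        exact le_of_mul_le_mul_left hfinal h1b
  -- derive the contradiction
  have hfreq := Filter.frequently_lt_of_lt_limsup hcobdd (show L - δ < L by linarith)
  obtain ⟨n, hn, hrn⟩ := (frequently_atTop.1 hfreq) (max N0 N1 + j)
  set i := n - j with hi
  have hij : i + j = n := by omega
  have hiN0 : N0 ≤ i := by omega
  have hiN1 : N1 ≤ i := by omega
  have hkey := KEY j i hiN0
  rw [hij] at hkey
  have hsum_ge : (j:ℝ) * a ≤ ∑ m ∈ Finset.range j, lam (i + m) := by
    have := Finset.card_nsmul_le_sum (Finset.range j) (fun m => lam (i + m)) a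
      (fun m _ => (hlam (i + m)).1)
    simpa [nsmul_eq_mul] using this
  have hXb : ‖z n - x i‖ ≤ 2 * M := by
    calc ‖z n - x i‖ ≤ ‖z n‖ + ‖x i‖ := norm_sub_le _ _
      _ ≤ 2 * M := by linarith [(hbd n).2, (hbd i).1]
  have hri : r i < L + δ := hN1 i hiN1
  have c1 : (1 + (j:ℝ) * a) * (L - δ) ≤ (1 + ∑ m ∈ Finset.range j, lam (i + m)) * r n := by
    have t1 : 0 ≤ (∑ m ∈ Finset.range j, lam (i + m) - (j:ℝ) * a) * r n :=
      mul_nonneg (by linarith) (hr0 n)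
    have t2 : 0 ≤ (1 + (j:ℝ) * a) * (r n - (L - δ)) :=
      mul_nonneg (by positivity) (by linarith)
    nlinarith
  have c2 : Q j * (r i - r n) ≤ Q j * (2 * δ) :=
    mul_le_mul_of_nonneg_left (by linarith) (hQpos j)
  have final : (1 + (j:ℝ) * a) * (L - δ) - Q j * (2 * δ) - K j * δ ≤ 2 * M := by
    calc (1 + (j:ℝ) * a) * (L - δ) - Q j * (2 * δ) - K j * δ
        ≤ (1 + ∑ m ∈ Finset.range j, lam (i + m)) * r n - Q j * (r i - r n) - K j * δ := by
          linarith
      _ ≤ ‖z n - x i‖ := hkey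
      _ ≤ 2 * M := hXb
  -- but (1 + j a) L > 4M + 2 and C δ < 2M + 2
  have expand : (1 + (j:ℝ) * a) * (L - δ) = (1 + (j:ℝ) * a) * L - (1 + (j:ℝ) * a) * δ := by ring
  have hCd : ((1 + (j:ℝ) * a) + 2 * Q j + K j) * δ < 2 * M + 2 := by
    rw [hC] at hδC
    linarith
  nlinarith [final, hjL, hCd]

lemma exists_weak_cluster {H : Type*} [NormedAddCommGroup H] [InnerProductSpace ℝ H]
    [CompleteSpace H] (x : ℕ → H) (M : ℝ) (hM : ∀ k, ‖x k‖ ≤ M) :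
    ∃ z : H, ∃ φ : ℕ → ℕ, StrictMono φ ∧
      ∀ w : H, Tendsto (fun k => ⟪x (φ k), w⟫_ℝ) atTop (nhds ⟪z, w⟫_ℝ) := by
  have hM0 : 0 ≤ M := (norm_nonneg _).trans (hM 0)
  -- Step 1 : diagonal subsequence via compactness of a product of intervals
  set F : ℕ → ℕ → ℝ := fun k j => ⟪x k, x j⟫_ℝ with hF
  have hFmem : ∀ k, F k ∈ Set.univ.pi fun _ : ℕ => Set.Icc (-(M*M)) (M*M) := by
    intro k
    intro j _
    have := abs_real_inner_le_norm (x k) (x j)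
    have h2 : |⟪x k, x j⟫_ℝ| ≤ M * M :=
      this.trans (mul_le_mul (hM k) (hM j) (norm_nonneg _) hM0)
    exact abs_le.1 h2
  have hcomp : IsCompact (Set.univ.pi fun _ : ℕ => Set.Icc (-(M*M)) (M*M)) :=
    isCompact_univ_pi fun _ => isCompact_Icc
  obtain ⟨g, -, φ, hφ, hconv⟩ := hcomp.tendsto_subseq hFmem
  have hcoord : ∀ j, Tendsto (fun k => ⟪x (φ k), x j⟫_ℝ) atTop (nhds (g j)) := by
    intro j
    exact (tendsto_pi_nhds.1 hconv j)
  -- Step 2 : the set of good vectors is a closed subspace containing the range of x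
  set S : Submodule ℝ H :=
    { carrier := {w | ∃ r : ℝ, Tendsto (fun k => ⟪x (φ k), w⟫_ℝ) atTop (nhds r)}
      add_mem' := by
        rintro w w' ⟨r, hr⟩ ⟨r', hr'⟩
        exact ⟨r + r', by simpa [inner_add_right] using hr.add hr'⟩
      zero_mem' := ⟨0, by simpa using (tendsto_const_nhds : Tendsto (fun _ : ℕ => (0:ℝ)) atTop _)⟩
      smul_mem' := by
        rintro t w ⟨r, hr⟩
        exact ⟨t * r, by simpa [real_inner_smul_right] using hr.const_mul t⟩ } with hS
  have hrange : ∀ j, x j ∈ S := fun j => ⟨g j, hcoord j⟩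
  have hclosed : IsClosed (S : Set H) := by
    rw [← closure_subset_iff_isClosed]
    intro w hw
    have hcau : CauchySeq (fun k => ⟪x (φ k), w⟫_ℝ) := by
      rw [Metric.cauchySeq_iff]
      intro ε hε
      have hpos : 0 < ε / (3 * (M + 1)) := by positivity
      obtain ⟨w', hw'S, hww'⟩ := Metric.mem_closure_iff.1 hw _ hpos
      obtain ⟨r', hr'⟩ := hw'S
      have hcau' := hr'.cauchySeq
      rw [Metric.cauchySeq_iff] at hcau'
      obtain ⟨N, hN⟩ := hcau' (ε/3) (by positivity)
      refine ⟨N, fun m hm n hn => ?_⟩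
      have key : ∀ k, |⟪x (φ k), w⟫_ℝ - ⟪x (φ k), w'⟫_ℝ| < ε/3 := by
        intro k
        rw [← inner_sub_right]
        calc |⟪x (φ k), w - w'⟫_ℝ| ≤ ‖x (φ k)‖ * ‖w - w'‖ := abs_real_inner_le_norm _ _
          _ ≤ M * ‖w - w'‖ := by
              apply mul_le_mul_of_nonneg_right (hM _) (norm_nonneg _)
          _ < ε/3 := by
              have h1 : ‖w - w'‖ < ε / (3 * (M + 1)) := by
                rw [← dist_eq_norm]; exact hww'
              have h2 : M * ‖w - w'‖ ≤ (M+1) * ‖w - w'‖ := by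
                apply mul_le_mul_of_nonneg_right (by linarith) (norm_nonneg _)
              have h3 : (M+1) * ‖w - w'‖ < (M+1) * (ε / (3 * (M+1))) := by
                apply mul_lt_mul_of_pos_left h1 (by linarith)
              have h4 : (M+1) * (ε / (3 * (M+1))) = ε/3 := by
                field_simp
              linarith
      have hd := hN m hm n hn
      rw [Real.dist_eq] at hd ⊢
      have k1 := key m
      have k2 := key n
      have : ⟪x (φ m), w⟫_ℝ - ⟪x (φ n), w⟫_ℝ
          = (⟪x (φ m), w⟫_ℝ - ⟪x (φ m), w'⟫_ℝ) + (⟪x (φ m), w'⟫_ℝ - ⟪x (φ n), w'⟫_ℝ)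
            + (⟪x (φ n), w'⟫_ℝ - ⟪x (φ n), w⟫_ℝ) := by ring
      rw [this]
      calc _ ≤ |⟪x (φ m), w⟫_ℝ - ⟪x (φ m), w'⟫_ℝ| + |⟪x (φ m), w'⟫_ℝ - ⟪x (φ n), w'⟫_ℝ|
            + |⟪x (φ n), w'⟫_ℝ - ⟪x (φ n), w⟫_ℝ| := abs_add_three _ _ _
        _ < ε := by
            have k2' : |⟪x (φ n), w'⟫_ℝ - ⟪x (φ n), w⟫_ℝ| < ε/3 := by
              rw [abs_sub_comm]; exact k2
            linarith
    obtain ⟨r, hr⟩ := cauchySeq_tendsto_of_complete hcau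
    exact ⟨r, hr⟩
  haveI : CompleteSpace S := hclosed.completeSpace_coe
  -- Step 3 : every vector is good, via orthogonal projection onto S
  have key : ∀ w : H, ∃ r : ℝ, Tendsto (fun k => ⟪x (φ k), w⟫_ℝ) atTop (nhds r) := by
    intro w
    set p : H := (Submodule.orthogonalProjection S w : H) with hpdef
    have hp : p ∈ S := SetLike.coe_mem _
    obtain ⟨r, hr⟩ := hp
    refine ⟨r, ?_⟩
    have horth : ∀ k : ℕ, ⟪x (φ k), w⟫_ℝ = ⟪x (φ k), p⟫_ℝ := by
      intro k
      have h1 : w - p ∈ Sᗮ := S.sub_starProjection_mem_orthogonal w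
      have h2 : ⟪x (φ k), w - p⟫_ℝ = 0 :=
        (Submodule.mem_orthogonal S _).1 h1 _ (hrange (φ k))
      rw [inner_sub_right] at h2
      linarith
    simpa only [horth] using hr
  choose glim hglim using key
  -- Step 4 : Riesz representation
  have hadd : ∀ w w', glim (w + w') = glim w + glim w' := by
    intro w w'
    refine tendsto_nhds_unique (hglim (w + w')) ?_
    simpa [inner_add_right] using (hglim w).add (hglim w')
  have hsmul : ∀ (t : ℝ) w, glim (t • w) = t * glim w := by
    intro t w
    refine tendsto_nhds_unique (hglim (t • w)) ?_
    simpa [real_inner_smul_right] using (hglim w).const_mul t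
  have hbound : ∀ w, |glim w| ≤ M * ‖w‖ := by
    intro w
    have h1 : Tendsto (fun k => |⟪x (φ k), w⟫_ℝ|) atTop (nhds |glim w|) := (hglim w).abs
    refine le_of_tendsto h1 (Eventually.of_forall fun k => ?_)
    exact (abs_real_inner_le_norm _ _).trans
      (mul_le_mul_of_nonneg_right (hM _) (norm_nonneg _))
  set f : H →ₗ[ℝ] ℝ :=
    { toFun := glim
      map_add' := hadd
      map_smul' := hsmul } with hfdef
  set Fc : H →L[ℝ] ℝ := f.mkContinuous M (fun w => by
    rw [Real.norm_eq_abs]; exact hbound w) with hFc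
  set z : H := (InnerProductSpace.toDual ℝ H).symm Fc with hz
  refine ⟨z, φ, hφ, fun w => ?_⟩
  have : ⟪z, w⟫_ℝ = Fc w := by
    rw [hz, InnerProductSpace.toDual_symm_apply]
  rw [this]
  have : Fc w = glim w := rfl
  rw [this]
  exact hglim w

set_option maxHeartbeats 1000000 in
theorem stmt11 {H : Type*} [NormedAddCommGroup H] [InnerProductSpace ℝ H] [CompleteSpace H]
    (A : H → Set H)
    (hmono : ∀ x y xu yv : H, xu ∈ A x → yv ∈ A y → 0 ≤ ⟪x - y, xu - yv⟫_ℝ)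
    (hmax : ∀ x xu : H, (∀ y yv : H, yv ∈ A y → 0 ≤ ⟪x - y, xu - yv⟫_ℝ) → xu ∈ A x)
    (J : ℝ → H → H)
    (hJ : ∀ c : ℝ, 0 < c → ∀ x : H, (1 / c) • (x - J c x) ∈ A (J c x))
    (u : H) (e : ℕ → H) (c α β γ δ : ℕ → ℝ) (hc : ∀ k, 0 < c k)
    (x : ℕ → H)
    (hrec : ∀ k, x (k + 1) = α k • u + β k • x k + γ k • J (c k) (x k) + δ k • e k)
    (hxbdd : Bornology.IsBounded (Set.range x))
    (hβγ : ∀ k, β k + γ k ≤ 1)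
    (hα0 : Tendsto α atTop (nhds 0))
    (hβlimsup : ∃ r < (1 : ℝ), ∀ᶠ k in atTop, |β k| ≤ r)
    (hφ0 : Tendsto (fun k => 1 - α k - β k - γ k) atTop (nhds 0))
    (hliminf : ∃ a > (0 : ℝ), ∀ᶠ k in atTop, a ≤ 1 - β k - γ k / 2)
    (hlimsup : ∃ b < (1 : ℝ), ∀ᶠ k in atTop, 1 - β k - γ k / 2 ≤ b)
    (hde0 : Tendsto (fun k => δ k • e k) atTop (nhds (0 : H)))
    (hcratio : Tendsto (fun k => 1 - c k / c (k + 1)) atTop (nhds 0)) :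
    Bornology.IsBounded (Set.range fun k => J (c k) (x k)) ∧
      Tendsto (fun k => x k - J (c k) (x k)) atTop (nhds (0 : H)) ∧
      (((∃ ε > (0 : ℝ), ∀ k, ε ≤ c k) ∨ Tendsto c atTop atTop) →
        (∃ z : H, WSeqClusterPt x z) ∧
          ∀ z : H, WSeqClusterPt x z → (0 : H) ∈ A z) := by
  obtain ⟨r, hr1, hrEv⟩ := hβlimsup
  obtain ⟨a, ha, haEv⟩ := hliminf
  obtain ⟨b, hb, hbEv⟩ := hlimsup
  obtain ⟨y, hyk⟩ : ∃ y : ℕ → H, ∀ k, y k = J (c k) (x k) := ⟨_, fun _ => rfl⟩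
  obtain ⟨θ, hθk⟩ : ∃ θ : ℕ → ℝ, ∀ k, θ k = 1 - β k - γ k := ⟨_, fun _ => rfl⟩
  obtain ⟨lam, hlamk⟩ : ∃ lam : ℕ → ℝ, ∀ k, lam k = 1 - β k - γ k / 2 := ⟨_, fun _ => rfl⟩
  have hr0 : (0:ℝ) ≤ r := le_trans (abs_nonneg _) hrEv.exists.choose_spec
  have hab : a ≤ b := by
    obtain ⟨k, h1, h2⟩ := (haEv.and hbEv).exists
    linarith
  have hb0 : 0 < b := lt_of_lt_of_le ha hab
  -- θ → 0 and θ ≥ 0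
  have hθ0 : Tendsto θ atTop (nhds 0) := by
    have h1 := hφ0.add hα0
    have h2 : (fun k => (1 - α k - β k - γ k) + α k) = θ := by
      funext k; rw [hθk]; ring
    rw [h2] at h1
    simpa using h1
  have hθnn : ∀ k, 0 ≤ θ k := fun k => by rw [hθk]; linarith [hβγ k]
  -- eventual facts
  have hγev : ∀ᶠ k in atTop, a ≤ γ k := by
    have h1 : ∀ᶠ k in atTop, θ k < a / 2 := hθ0.eventually_lt_const (by linarith)
    filter_upwards [h1, haEv] with k h2 h3
    rw [hθk] at h2
    linarith
  have hαev : ∀ᶠ k in atTop, |α k| ≤ 1 := by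
    have h1 : ∀ᶠ k in atTop, |α k| < 1 := by
      have h0 : Tendsto (fun k => |α k|) atTop (nhds 0) := by
        simpa using hα0.abs
      exact h0.eventually_lt_const (by norm_num : (0:ℝ) < 1)
    filter_upwards [h1] with k h2 using h2.le
  have hlamEv : ∀ᶠ k in atTop, a ≤ lam k ∧ lam k ≤ b := by
    filter_upwards [haEv, hbEv] with k h1 h2
    rw [hlamk]
    exact ⟨h1, h2⟩
  -- bounds
  obtain ⟨Mx, hMx⟩ : ∃ Mx, ∀ k, ‖x k‖ ≤ Mx := by
    obtain ⟨C, hC⟩ := isBounded_iff_forall_norm_le.1 hxbdd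
    exact ⟨C, fun k => hC _ (Set.mem_range_self k)⟩
  have hMx0 : 0 ≤ Mx := le_trans (norm_nonneg _) (hMx 0)
  obtain ⟨De, hDe⟩ : ∃ De, ∀ k, ‖δ k • e k‖ ≤ De := bdd_of_tendsto hde0
  have hDe0 : 0 ≤ De := le_trans (norm_nonneg _) (hDe 0)
  have hu0 : 0 ≤ ‖u‖ := norm_nonneg u
  -- Part 1 : boundedness of y
  have hyev : ∀ᶠ k in atTop, ‖y k‖ ≤ (Mx + ‖u‖ + Mx + De) / a := by
    filter_upwards [hγev, hrEv, hαev] with k h1 h2 h3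
    have hγpos : 0 < γ k := lt_of_lt_of_le ha h1
    have hsolve : γ k • y k = x (k + 1) - α k • u - β k • x k - δ k • e k := by
      rw [hyk, hrec k]; abel
    have hnum : ‖x (k + 1) - α k • u - β k • x k - δ k • e k‖ ≤ Mx + ‖u‖ + Mx + De := by
      have e1 : ‖α k • u‖ ≤ ‖u‖ := by
        rw [norm_smul, Real.norm_eq_abs]
        calc |α k| * ‖u‖ ≤ 1 * ‖u‖ := mul_le_mul_of_nonneg_right h3 hu0
          _ = ‖u‖ := one_mul _
      have e2 : ‖β k • x k‖ ≤ Mx := by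
        rw [norm_smul, Real.norm_eq_abs]
        have : |β k| ≤ 1 := by linarith
        calc |β k| * ‖x k‖ ≤ 1 * Mx :=
            mul_le_mul this (hMx k) (norm_nonneg _) (by norm_num)
          _ = Mx := one_mul _
      calc ‖x (k + 1) - α k • u - β k • x k - δ k • e k‖
          ≤ ‖x (k + 1) - α k • u - β k • x k‖ + ‖δ k • e k‖ := norm_sub_le _ _
        _ ≤ (‖x (k + 1) - α k • u‖ + ‖β k • x k‖) + ‖δ k • e k‖ := by
            linarith [norm_sub_le (x (k + 1) - α k • u) (β k • x k)]
        _ ≤ ((‖x (k + 1)‖ + ‖α k • u‖) + ‖β k • x k‖) + ‖δ k • e k‖ := by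
            linarith [norm_sub_le (x (k + 1)) (α k • u)]
        _ ≤ Mx + ‖u‖ + Mx + De := by
            linarith [hMx (k + 1), hDe k, e1, e2]
    rw [le_div_iff₀ ha]
    have h4 : ‖y k‖ * a ≤ ‖y k‖ * γ k := by
      apply mul_le_mul_of_nonneg_left h1 (norm_nonneg _)
    have h5 : ‖y k‖ * γ k = ‖γ k • y k‖ := by
      rw [norm_smul, Real.norm_eq_abs, abs_of_pos hγpos]; ring
    rw [hsolve] at h5
    linarith
  have part1 : Bornology.IsBounded (Set.range fun k => J (c k) (x k)) := by
    have hyJ : (fun k => J (c k) (x k)) = y := by funext k; rw [hyk]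
    rw [hyJ]
    obtain ⟨N, hN⟩ := eventually_atTop.1 hyev
    exact range_bdd_of_eventually y _ N hN
  obtain ⟨My, hMy⟩ : ∃ My, ∀ k, ‖y k‖ ≤ My := by
    have hyJ : (fun k => J (c k) (x k)) = y := by funext k; rw [hyk]
    have part1' := part1
    rw [hyJ] at part1'
    obtain ⟨C, hC⟩ := isBounded_iff_forall_norm_le.1 part1'
    exact ⟨C, fun k => hC _ (Set.mem_range_self k)⟩
  have hMy0 : 0 ≤ My := le_trans (norm_nonneg _) (hMy 0)
  -- Part 2
  obtain ⟨nn, hnnk⟩ : ∃ nn : ℕ → H, ∀ k, nn k = (2:ℝ) • y k - x k := ⟨_, fun _ => rfl⟩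
  have hMn : ∀ k, ‖nn k‖ ≤ 2 * My + Mx := by
    intro k
    rw [hnnk]
    calc ‖(2:ℝ) • y k - x k‖ ≤ ‖(2:ℝ) • y k‖ + ‖x k‖ := norm_sub_le _ _
      _ ≤ 2 * My + Mx := by
          rw [norm_smul, Real.norm_eq_abs]
          have h1 := hMy k
          have h2 := hMx k
          rw [abs_of_pos (by norm_num : (0:ℝ) < 2)]
          linarith
  obtain ⟨t, htk⟩ : ∃ t : ℕ → H, ∀ k, t k = (lam k)⁻¹ • (α k • u + δ k • e k) :=
    ⟨_, fun _ => rfl⟩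
  obtain ⟨zz, hzzk⟩ : ∃ zz : ℕ → H, ∀ k, zz k = x k + (lam k)⁻¹ • (x (k + 1) - x k) :=
    ⟨_, fun _ => rfl⟩
  have hzzeq : ∀ k, a ≤ lam k → zz k = t k + ((lam k)⁻¹ * (γ k / 2)) • nn k := by
    intro k hk
    have hlamne : lam k ≠ 0 := (lt_of_lt_of_le ha hk).ne'
    have hrel := hlamk k
    rw [hzzk, htk, hnnk, hrec k, hyk]
    match_scalars <;> (field_simp ; try rw [hrel] ; try ring)
  have hrecS : ∀ k, a ≤ lam k → x (k + 1) = x k + lam k • (zz k - x k) := by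
    intro k hk
    have hlamne : lam k ≠ 0 := (lt_of_lt_of_le ha hk).ne'
    rw [hzzk, add_sub_cancel_left, smul_smul, mul_inv_cancel₀ hlamne, one_smul]
    abel
  have ht : ∀ m, a ≤ lam m → ‖t m‖ ≤ a⁻¹ * (|α m| * ‖u‖ + ‖δ m • e m‖) := by
    intro m hm
    have hlampos : 0 < lam m := lt_of_lt_of_le ha hm
    rw [htk, norm_smul, Real.norm_eq_abs, abs_of_nonneg (inv_nonneg.2 hlampos.le)]
    have h1 : ‖α m • u + δ m • e m‖ ≤ |α m| * ‖u‖ + ‖δ m • e m‖ := by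
      calc ‖α m • u + δ m • e m‖ ≤ ‖α m • u‖ + ‖δ m • e m‖ := norm_add_le _ _
        _ = |α m| * ‖u‖ + ‖δ m • e m‖ := by rw [norm_smul, Real.norm_eq_abs]
    have h2 : (lam m)⁻¹ ≤ a⁻¹ := inv_anti₀ ha hm
    exact mul_le_mul h2 h1 (norm_nonneg _) (inv_nonneg.2 ha.le)
  have hμfact : ∀ m, a ≤ lam m → a ≤ γ m →
      0 ≤ (lam m)⁻¹ * (γ m / 2) ∧ 1 - (lam m)⁻¹ * (γ m / 2) ≤ θ m * a⁻¹ ∧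
        (lam m)⁻¹ * (γ m / 2) ≤ 1 := by
    intro m hm hg
    have hlampos : 0 < lam m := lt_of_lt_of_le ha hm
    have hγpos : 0 < γ m := lt_of_lt_of_le ha hg
    have hθm : γ m / 2 ≤ lam m := by
      have := hθnn m
      rw [hθk] at this
      rw [hlamk]
      linarith
    refine ⟨mul_nonneg (inv_nonneg.2 hlampos.le) (by linarith), ?_, ?_⟩
    · have h1 : 1 - (lam m)⁻¹ * (γ m / 2) = (lam m)⁻¹ * (lam m - γ m / 2) := by
        field_simp
      have h2 : lam m - γ m / 2 = θ m := by rw [hlamk, hθk]; ring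
      rw [h1, h2, mul_comm]
      exact mul_le_mul_of_nonneg_left (inv_anti₀ ha hm) (hθnn m)
    · rw [← div_eq_inv_mul, div_le_one hlampos]
      exact hθm
  have hzzbd : ∀ k, a ≤ lam k → a ≤ γ k → |α k| ≤ 1 →
      ‖zz k‖ ≤ a⁻¹ * (‖u‖ + De) + (2 * My + Mx) := by
    intro k hk hg hα
    obtain ⟨hμ0, hμa, hμ1⟩ := hμfact k hk hg
    rw [hzzeq k hk]
    have h1 : ‖t k‖ ≤ a⁻¹ * (‖u‖ + De) := by
      have h2 := ht k hk
      have h3 : |α k| * ‖u‖ + ‖δ k • e k‖ ≤ ‖u‖ + De := by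
        have h3a : |α k| * ‖u‖ ≤ 1 * ‖u‖ := mul_le_mul_of_nonneg_right hα hu0
        have h3b := hDe k
        linarith
      have h4 : a⁻¹ * (|α k| * ‖u‖ + ‖δ k • e k‖) ≤ a⁻¹ * (‖u‖ + De) :=
        mul_le_mul_of_nonneg_left h3 (inv_nonneg.2 ha.le)
      linarith
    have h5 : ‖((lam k)⁻¹ * (γ k / 2)) • nn k‖ ≤ 2 * My + Mx := by
      rw [norm_smul, Real.norm_eq_abs, abs_of_nonneg hμ0]
      calc (lam k)⁻¹ * (γ k / 2) * ‖nn k‖ ≤ 1 * ‖nn k‖ :=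
          mul_le_mul_of_nonneg_right hμ1 (norm_nonneg _)
        _ ≤ 2 * My + Mx := by rw [one_mul]; exact hMn k
    calc ‖t k + ((lam k)⁻¹ * (γ k / 2)) • nn k‖
        ≤ ‖t k‖ + ‖((lam k)⁻¹ * (γ k / 2)) • nn k‖ := norm_add_le _ _
      _ ≤ a⁻¹ * (‖u‖ + De) + (2 * My + Mx) := add_le_add h1 h5
  -- the step-size ratio tends to 0 (in the other form)
  have hc1 : Tendsto (fun k => c k / c (k + 1)) atTop (nhds 1) := by
    have h1 := (tendsto_const_nhds : Tendsto (fun _ : ℕ => (1:ℝ)) atTop _).sub hcratio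
    simpa using h1
  have hc2 : Tendsto (fun k => c (k + 1) / c k) atTop (nhds 1) := by
    have h1 := hc1.inv₀ one_ne_zero
    have h2 : (fun k => (c k / c (k + 1))⁻¹) = fun k => c (k + 1) / c k := by
      funext k; rw [inv_div]
    rw [h2] at h1
    simpa using h1
  have hcr : Tendsto (fun k => |1 - c (k + 1) / c k|) atTop (nhds 0) := by
    have h1 := ((tendsto_const_nhds : Tendsto (fun _ : ℕ => (1:ℝ)) atTop _).sub hc2).abs
    simpa using h1
  have hden : Tendsto (fun k => ‖δ k • e k‖) atTop (nhds 0) := by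
    simpa using hde0.norm
  have hαabs : Tendsto (fun k => |α k|) atTop (nhds 0) := by simpa using hα0.abs
  -- η
  obtain ⟨η, hηk⟩ : ∃ η : ℕ → ℝ, ∀ k, η k =
      2 * (Mx + My) * |1 - c (k + 1) / c k| + (θ k + θ (k + 1)) * ((2 * My + Mx) * a⁻¹)
        + a⁻¹ * (|α k| * ‖u‖ + ‖δ k • e k‖)
        + a⁻¹ * (|α (k + 1)| * ‖u‖ + ‖δ (k + 1) • e (k + 1)‖) := ⟨_, fun _ => rfl⟩
  have hη0 : Tendsto η atTop (nhds 0) := by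
    have hθ1 : Tendsto (fun k => θ (k + 1)) atTop (nhds 0) := by
      exact hθ0.comp (tendsto_add_atTop_nat 1)
    have hα1 : Tendsto (fun k => |α (k + 1)|) atTop (nhds 0) := by
      exact hαabs.comp (tendsto_add_atTop_nat 1)
    have hd1 : Tendsto (fun k => ‖δ (k + 1) • e (k + 1)‖) atTop (nhds 0) := by
      exact hden.comp (tendsto_add_atTop_nat 1)
    have hfun : η = fun k =>
        2 * (Mx + My) * |1 - c (k + 1) / c k| + (θ k + θ (k + 1)) * ((2 * My + Mx) * a⁻¹)
          + a⁻¹ * (|α k| * ‖u‖ + ‖δ k • e k‖)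
          + a⁻¹ * (|α (k + 1)| * ‖u‖ + ‖δ (k + 1) • e (k + 1)‖) := funext hηk
    rw [hfun]
    have T1 : Tendsto (fun k => 2 * (Mx + My) * |1 - c (k + 1) / c k|) atTop (nhds 0) := by
      simpa using hcr.const_mul (2 * (Mx + My))
    have T2 : Tendsto (fun k => (θ k + θ (k + 1)) * ((2 * My + Mx) * a⁻¹)) atTop (nhds 0) := by
      simpa using (hθ0.add hθ1).mul_const ((2 * My + Mx) * a⁻¹)
    have T3 : Tendsto (fun k => a⁻¹ * (|α k| * ‖u‖ + ‖δ k • e k‖)) atTop (nhds 0) := by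
      simpa using ((hαabs.mul_const ‖u‖).add hden).const_mul a⁻¹
    have T4 : Tendsto (fun k => a⁻¹ * (|α (k + 1)| * ‖u‖ + ‖δ (k + 1) • e (k + 1)‖))
        atTop (nhds 0) := by
      simpa using ((hα1.mul_const ‖u‖).add hd1).const_mul a⁻¹
    simpa using ((T1.add T2).add T3).add T4
  -- the eventual bound on consecutive zz differences
  have hηev : ∀ᶠ k in atTop, ‖zz (k + 1) - zz k‖ ≤ ‖x (k + 1) - x k‖ + η k := by
    have hreg : ∀ᶠ k in atTop, (a ≤ lam k ∧ lam k ≤ b) ∧ a ≤ γ k ∧ |α k| ≤ 1 :=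
      hlamEv.and (hγev.and hαev)
    obtain ⟨K, hK⟩ := eventually_atTop.1 hreg
    rw [eventually_atTop]
    refine ⟨K, fun k hk => ?_⟩
    obtain ⟨⟨hlk, hlkb⟩, hgk, hak⟩ := hK k hk
    obtain ⟨⟨hlk1, hlkb1⟩, hgk1, hak1⟩ := hK (k + 1) (by omega)
    have e0 : zz (k + 1) - zz k = (t (k + 1) - t k)
        + (((lam (k + 1))⁻¹ * (γ (k + 1) / 2)) • nn (k + 1)
            - ((lam k)⁻¹ * (γ k / 2)) • nn k) := by
      rw [hzzeq k hlk, hzzeq (k + 1) hlk1]; abel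
    -- bound for the difference of the nonexpansive parts
    have hnd : ‖nn (k + 1) - nn k‖
        ≤ ‖x (k + 1) - x k‖ + 2 * (Mx + My) * |1 - c (k + 1) / c k| := by
      have e1 : nn (k + 1) - nn k
          = (((2:ℝ) • J (c (k + 1)) (x (k + 1)) - x (k + 1))
              - ((2:ℝ) • J (c (k + 1)) (x k) - x k))
            + (2:ℝ) • (J (c (k + 1)) (x k) - J (c k) (x k)) := by
        rw [hnnk, hnnk, hyk, hyk]
        module
      have h1 := res_reflected hmono hJ (hc (k + 1)) (x (k + 1)) (x k)
      have h2 := res_identity hmono hJ (hc k) (hc (k + 1)) (x k)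
      have h3 : ‖x k - J (c k) (x k)‖ ≤ Mx + My := by
        calc ‖x k - J (c k) (x k)‖ ≤ ‖x k‖ + ‖J (c k) (x k)‖ := norm_sub_le _ _
          _ ≤ Mx + My := by
              have := hMy k
              rw [hyk] at this
              linarith [hMx k]
      have h4 : ‖J (c (k + 1)) (x k) - J (c k) (x k)‖ ≤ |1 - c (k + 1) / c k| * (Mx + My) :=
        h2.trans (mul_le_mul_of_nonneg_left h3 (abs_nonneg _))
      calc ‖nn (k + 1) - nn k‖
          ≤ ‖((2:ℝ) • J (c (k + 1)) (x (k + 1)) - x (k + 1))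
              - ((2:ℝ) • J (c (k + 1)) (x k) - x k)‖
            + ‖(2:ℝ) • (J (c (k + 1)) (x k) - J (c k) (x k))‖ := by
            rw [e1]; exact norm_add_le _ _
        _ ≤ ‖x (k + 1) - x k‖ + 2 * (|1 - c (k + 1) / c k| * (Mx + My)) := by
            have h5 : ‖(2:ℝ) • (J (c (k + 1)) (x k) - J (c k) (x k))‖
                = 2 * ‖J (c (k + 1)) (x k) - J (c k) (x k)‖ := by
              rw [norm_smul, Real.norm_eq_abs, abs_of_pos (by norm_num : (0:ℝ) < 2)]
            rw [h5]
            have h6 : 2 * ‖J (c (k + 1)) (x k) - J (c k) (x k)‖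
                ≤ 2 * (|1 - c (k + 1) / c k| * (Mx + My)) := by linarith
            linarith
        _ = ‖x (k + 1) - x k‖ + 2 * (Mx + My) * |1 - c (k + 1) / c k| := by ring
    have e2 : ((lam (k + 1))⁻¹ * (γ (k + 1) / 2)) • nn (k + 1)
          - ((lam k)⁻¹ * (γ k / 2)) • nn k
        = (nn (k + 1) - nn k)
          - (1 - (lam (k + 1))⁻¹ * (γ (k + 1) / 2)) • nn (k + 1)
          + (1 - (lam k)⁻¹ * (γ k / 2)) • nn k := by
      module
    obtain ⟨hμ0k, hμak, hμ1k⟩ := hμfact k hlk hgk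
    obtain ⟨hμ0k1, hμak1, hμ1k1⟩ := hμfact (k + 1) hlk1 hgk1
    have h5 : ‖(1 - (lam (k + 1))⁻¹ * (γ (k + 1) / 2)) • nn (k + 1)‖
        ≤ θ (k + 1) * a⁻¹ * (2 * My + Mx) := by
      rw [norm_smul, Real.norm_eq_abs, abs_of_nonneg (by linarith : 0 ≤ 1 - (lam (k + 1))⁻¹ * (γ (k + 1) / 2))]
      apply mul_le_mul hμak1 (hMn (k + 1)) (norm_nonneg _)
      exact mul_nonneg (hθnn _) (inv_nonneg.2 ha.le)
    have h6 : ‖(1 - (lam k)⁻¹ * (γ k / 2)) • nn k‖ ≤ θ k * a⁻¹ * (2 * My + Mx) := by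
      rw [norm_smul, Real.norm_eq_abs, abs_of_nonneg (by linarith : 0 ≤ 1 - (lam k)⁻¹ * (γ k / 2))]
      apply mul_le_mul hμak (hMn k) (norm_nonneg _)
      exact mul_nonneg (hθnn _) (inv_nonneg.2 ha.le)
    have h7 : ‖t (k + 1) - t k‖ ≤ a⁻¹ * (|α (k + 1)| * ‖u‖ + ‖δ (k + 1) • e (k + 1)‖)
        + a⁻¹ * (|α k| * ‖u‖ + ‖δ k • e k‖) := by
      calc ‖t (k + 1) - t k‖ ≤ ‖t (k + 1)‖ + ‖t k‖ := norm_sub_le _ _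
        _ ≤ _ := add_le_add (ht (k + 1) hlk1) (ht k hlk)
    have h8 : ‖((lam (k + 1))⁻¹ * (γ (k + 1) / 2)) • nn (k + 1)
          - ((lam k)⁻¹ * (γ k / 2)) • nn k‖
        ≤ ‖nn (k + 1) - nn k‖ + θ (k + 1) * a⁻¹ * (2 * My + Mx)
          + θ k * a⁻¹ * (2 * My + Mx) := by
      rw [e2]
      calc ‖(nn (k + 1) - nn k)
            - (1 - (lam (k + 1))⁻¹ * (γ (k + 1) / 2)) • nn (k + 1)
            + (1 - (lam k)⁻¹ * (γ k / 2)) • nn k‖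
          ≤ ‖(nn (k + 1) - nn k)
              - (1 - (lam (k + 1))⁻¹ * (γ (k + 1) / 2)) • nn (k + 1)‖
            + ‖(1 - (lam k)⁻¹ * (γ k / 2)) • nn k‖ := norm_add_le _ _
        _ ≤ (‖nn (k + 1) - nn k‖
              + ‖(1 - (lam (k + 1))⁻¹ * (γ (k + 1) / 2)) • nn (k + 1)‖)
            + ‖(1 - (lam k)⁻¹ * (γ k / 2)) • nn k‖ := by
            linarith [norm_sub_le (nn (k + 1) - nn k)
              ((1 - (lam (k + 1))⁻¹ * (γ (k + 1) / 2)) • nn (k + 1))]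
        _ ≤ ‖nn (k + 1) - nn k‖ + θ (k + 1) * a⁻¹ * (2 * My + Mx)
            + θ k * a⁻¹ * (2 * My + Mx) := by linarith
    have hfin : ‖zz (k + 1) - zz k‖ ≤ ‖t (k + 1) - t k‖
        + ‖((lam (k + 1))⁻¹ * (γ (k + 1) / 2)) • nn (k + 1)
            - ((lam k)⁻¹ * (γ k / 2)) • nn k‖ := by
      rw [e0]; exact norm_add_le _ _
    have hexp : (θ k + θ (k + 1)) * ((2 * My + Mx) * a⁻¹)
        = θ (k + 1) * a⁻¹ * (2 * My + Mx) + θ k * a⁻¹ * (2 * My + Mx) := by ring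
    rw [hηk]
    linarith
  have hev_z : ∀ ε : ℝ, 0 < ε →
      ∃ N, ∀ k, N ≤ k → ‖zz (k + 1) - zz k‖ ≤ ‖x (k + 1) - x k‖ + ε := by
    intro ε hε
    have h1 : ∀ᶠ k in atTop, η k < ε := hη0.eventually_lt_const hε
    obtain ⟨N, hN⟩ := eventually_atTop.1 (hηev.and h1)
    exact ⟨N, fun k hk => le_trans (hN k hk).1 (by linarith [(hN k hk).2])⟩
  -- apply Suzuki's lemma to the shifted sequences
  obtain ⟨K3, hK3⟩ := eventually_atTop.1 (hlamEv.and (hγev.and hαev))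
  obtain ⟨M0, hM0⟩ : ∃ M0, (∀ k, ‖x k‖ ≤ M0) ∧
      ∀ k, a ≤ lam k → a ≤ γ k → |α k| ≤ 1 → ‖zz k‖ ≤ M0 := by
    refine ⟨Mx + (a⁻¹ * (‖u‖ + De) + (2 * My + Mx)), fun k => ?_, fun k h1 h2 h3 => ?_⟩
    · have : 0 ≤ a⁻¹ * (‖u‖ + De) + (2 * My + Mx) := by positivity
      linarith [hMx k]
    · have := hzzbd k h1 h2 h3
      linarith
  have hsz : Tendsto (fun k => ‖zz (k + K3) - x (k + K3)‖) atTop (nhds 0) := by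
    apply suzuki (fun k => x (k + K3)) (fun k => zz (k + K3)) (fun k => lam (k + K3))
      a b M0 ha hb
    · intro k
      exact (hK3 (k + K3) (by omega)).1
    · intro k
      have e : k + 1 + K3 = (k + K3) + 1 := by omega
      show x (k + 1 + K3) = _
      rw [e]
      exact hrecS (k + K3) (hK3 (k + K3) (by omega)).1.1
    · intro k
      obtain ⟨⟨h1, h2⟩, h3, h4⟩ := hK3 (k + K3) (by omega)
      exact ⟨hM0.1 _, hM0.2 _ h1 h3 h4⟩
    · intro ε hε
      obtain ⟨N, hN⟩ := hev_z ε hε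
      refine ⟨N, fun k hk => ?_⟩
      have e : k + 1 + K3 = (k + K3) + 1 := by omega
      show ‖zz (k + 1 + K3) - zz (k + K3)‖ ≤ ‖x (k + 1 + K3) - x (k + K3)‖ + ε
      rw [e]
      exact hN (k + K3) (by omega)
  have hzzx : Tendsto (fun k => ‖zz k - x k‖) atTop (nhds 0) :=
    (tendsto_add_atTop_iff_nat K3).1 hsz
  have hxdiff : Tendsto (fun k => x (k + 1) - x k) atTop (nhds (0:H)) := by
    apply squeeze_zero_norm' _ hzzx
    filter_upwards [hlamEv] with k hk1
    have e : x (k + 1) - x k = lam k • (zz k - x k) := by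
      rw [hrecS k hk1.1, add_sub_cancel_left]
    rw [e, norm_smul, Real.norm_eq_abs, abs_of_pos (lt_of_lt_of_le ha hk1.1)]
    exact mul_le_of_le_one_left (norm_nonneg _) (by linarith [hk1.2])
  have hgxy : Tendsto (fun k => γ k • (x k - y k)) atTop (nhds (0:H)) := by
    have hid : ∀ k, γ k • (x k - y k)
        = (x k - x (k + 1)) + α k • u - θ k • x k + δ k • e k := by
      intro k
      rw [hyk, hθk, hrec k]
      module
    rw [funext hid]
    have T1 : Tendsto (fun k => x k - x (k + 1)) atTop (nhds (0:H)) := by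
      simpa using hxdiff.neg
    have T2 : Tendsto (fun k => α k • u) atTop (nhds (0:H)) := by
      simpa using hα0.smul_const u
    have T3 : Tendsto (fun k => θ k • x k) atTop (nhds (0:H)) := by
      have hbnd : ∀ k, ‖θ k • x k‖ ≤ |θ k| * Mx := fun k => by
        rw [norm_smul, Real.norm_eq_abs]
        exact mul_le_mul_of_nonneg_left (hMx k) (abs_nonneg _)
      have hθa : Tendsto (fun k => |θ k|) atTop (nhds 0) := by simpa using hθ0.abs
      have hten : Tendsto (fun k => |θ k| * Mx) atTop (nhds 0) := by
        simpa using hθa.mul_const Mx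
      exact squeeze_zero_norm hbnd hten
    have := ((T1.add T2).sub T3).add hde0
    simpa using this
  have part2 : Tendsto (fun k => x k - J (c k) (x k)) atTop (nhds (0:H)) := by
    have hyJ2 : (fun k => x k - J (c k) (x k)) = fun k => x k - y k := by
      funext k; rw [hyk]
    rw [hyJ2]
    apply squeeze_zero_norm' (a := fun k => a⁻¹ * ‖γ k • (x k - y k)‖)
    · filter_upwards [hγev] with k hg
      have hγpos : 0 < γ k := lt_of_lt_of_le ha hg
      rw [norm_smul, Real.norm_eq_abs, abs_of_pos hγpos]
      calc ‖x k - y k‖ = a⁻¹ * (a * ‖x k - y k‖) := by field_simp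
        _ ≤ a⁻¹ * (γ k * ‖x k - y k‖) := by
            apply mul_le_mul_of_nonneg_left _ (inv_nonneg.2 ha.le)
            exact mul_le_mul_of_nonneg_right hg (norm_nonneg _)
    · simpa using hgxy.norm.const_mul a⁻¹
  refine ⟨part1, part2, fun hcs => ?_⟩
  -- Part 3
  obtain ⟨z0, φ0, hφ0', hconv0⟩ := exists_weak_cluster x Mx hMx
  refine ⟨⟨z0, φ0, hφ0', hconv0⟩, ?_⟩
  intro z hz
  obtain ⟨φ, hφ, hconv⟩ := (hz : ∃ φ : ℕ → ℕ, StrictMono φ ∧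
    ∀ w : H, Tendsto (fun k => ⟪x (φ k), w⟫_ℝ) atTop (nhds ⟪z, w⟫_ℝ))
  obtain ⟨v, hvk⟩ : ∃ v : ℕ → H, ∀ k, v k = (1 / c k) • (x k - J (c k) (x k)) :=
    ⟨_, fun _ => rfl⟩
  have hvA : ∀ k, v k ∈ A (J (c k) (x k)) := fun k => by
    rw [hvk]; exact hJ (c k) (hc k) (x k)
  have hdb : ∀ k, ‖x k - J (c k) (x k)‖ ≤ Mx + My := by
    intro k
    calc ‖x k - J (c k) (x k)‖ ≤ ‖x k‖ + ‖J (c k) (x k)‖ := norm_sub_le _ _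
      _ ≤ Mx + My := by
          have := hMy k
          rw [hyk] at this
          linarith [hMx k]
  have hv0 : Tendsto v atTop (nhds (0:H)) := by
    rcases hcs with ⟨ε, hε, hεc⟩ | htop
    · apply squeeze_zero_norm (a := fun k => (1 / ε) * ‖x k - J (c k) (x k)‖)
      · intro k
        rw [hvk, norm_smul, Real.norm_eq_abs, abs_of_pos (by simpa using one_div_pos.2 (hc k) : (0:ℝ) < 1 / c k)]
        exact mul_le_mul_of_nonneg_right (one_div_le_one_div_of_le hε (hεc k)) (norm_nonneg _)
      · simpa using part2.norm.const_mul (1 / ε)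
    · apply squeeze_zero_norm (a := fun k => (Mx + My) * (c k)⁻¹)
      · intro k
        rw [hvk, norm_smul, Real.norm_eq_abs, abs_of_pos (by simpa using one_div_pos.2 (hc k) : (0:ℝ) < 1 / c k),
          one_div, mul_comm]
        exact mul_le_mul_of_nonneg_right (hdb k) (inv_nonneg.2 (hc k).le)
      · have h1 : Tendsto (fun k => (c k)⁻¹) atTop (nhds 0) :=
          tendsto_inv_atTop_zero.comp htop
        simpa using h1.const_mul (Mx + My)
  apply hmax z 0
  intro w wv hwv
  have hterm : ∀ k, 0 ≤ ⟪J (c (φ k)) (x (φ k)) - w, v (φ k) - wv⟫_ℝ :=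
    fun k => hmono _ _ _ _ (hvA (φ k)) hwv
  have hvφ : Tendsto (fun k => v (φ k)) atTop (nhds (0:H)) := hv0.comp hφ.tendsto_atTop
  have hdφ : Tendsto (fun k => x (φ k) - J (c (φ k)) (x (φ k))) atTop (nhds (0:H)) :=
    part2.comp hφ.tendsto_atTop
  have T1 : Tendsto (fun k => ⟪J (c (φ k)) (x (φ k)) - w, v (φ k)⟫_ℝ) atTop (nhds 0) := by
    apply squeeze_zero_norm (a := fun k => (My + ‖w‖) * ‖v (φ k)‖)
    · intro k
      rw [Real.norm_eq_abs]
      calc |⟪J (c (φ k)) (x (φ k)) - w, v (φ k)⟫_ℝ|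
          ≤ ‖J (c (φ k)) (x (φ k)) - w‖ * ‖v (φ k)‖ := abs_real_inner_le_norm _ _
        _ ≤ (My + ‖w‖) * ‖v (φ k)‖ := by
            apply mul_le_mul_of_nonneg_right _ (norm_nonneg _)
            calc ‖J (c (φ k)) (x (φ k)) - w‖
                ≤ ‖J (c (φ k)) (x (φ k))‖ + ‖w‖ := norm_sub_le _ _
              _ ≤ My + ‖w‖ := by
                  have := hMy (φ k)
                  rw [hyk] at this
                  linarith
    · simpa using hvφ.norm.const_mul (My + ‖w‖)
  have T2 : Tendsto (fun k => ⟪x (φ k) - J (c (φ k)) (x (φ k)), wv⟫_ℝ) atTop (nhds 0) := by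
    apply squeeze_zero_norm (a := fun k => ‖x (φ k) - J (c (φ k)) (x (φ k))‖ * ‖wv‖)
    · intro k
      rw [Real.norm_eq_abs]
      exact abs_real_inner_le_norm _ _
    · simpa using hdφ.norm.mul_const ‖wv‖
  have T3 := hconv wv
  have hidt : (fun k => ⟪J (c (φ k)) (x (φ k)) - w, v (φ k) - wv⟫_ℝ)
      = fun k => ⟪J (c (φ k)) (x (φ k)) - w, v (φ k)⟫_ℝ
        + ⟪x (φ k) - J (c (φ k)) (x (φ k)), wv⟫_ℝ
        - ⟪x (φ k), wv⟫_ℝ + ⟪w, wv⟫_ℝ := by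
    funext k
    simp only [inner_sub_left, inner_sub_right]
    ring
  have htarget : ⟪z - w, (0:H) - wv⟫_ℝ = 0 + 0 - ⟪z, wv⟫_ℝ + ⟪w, wv⟫_ℝ := by
    simp only [zero_sub, inner_neg_right, inner_sub_left]
    ring
  have hlim : Tendsto (fun k => ⟪J (c (φ k)) (x (φ k)) - w, v (φ k) - wv⟫_ℝ) atTop
      (nhds (⟪z - w, (0:H) - wv⟫_ℝ)) := by
    rw [hidt, htarget]
    exact ((T1.add T2).sub T3).add tendsto_const_nhds
  exact ge_of_tendsto hlim (Eventually.of_forall hterm)
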